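/- arXiv:1207.0713 — 8 statements merged into one kernel-verified Lean document; each statement's English description precedes it below -/
import Mathlib

section
/- Let A be a set with at least two elements and let f : A³ → A be the operation defined by f(a,a,b) = f(a,b,a) = f(b,a,a) = a for all a,b ∈ A, and f(a,b,c) = a whenever a,b,c are pairwise distinct. Then every ternary term operation t of the algebra (A, f) satisfies exactly one of the following: t(x,y,z) = x for all x,y,z; t(x,y,z) = y for all x,y,z; t(x,y,z) = z for all x,y,z; or t is a majority operation, i.e., t(x,x,y) = t(x,y,x) = t(y,x,x) = x for all x,y ∈ A. -/
/-- The ternary term operations of an algebra with a single ternary basic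
operation `f`: the smallest set of functions `A → A → A → A` containing the
three projections and closed under pointwise composition with `f`. -/
inductive IsTernaryTermOp {A : Type*} (f : A → A → A → A) : (A → A → A → A) → Prop
  | proj1 : IsTernaryTermOp f (fun x _ _ => x)
  | proj2 : IsTernaryTermOp f (fun _ y _ => y)
  | proj3 : IsTernaryTermOp f (fun _ _ z => z)
  | comp (t₁ t₂ t₃ : A → A → A → A) :
      IsTernaryTermOp f t₁ → IsTernaryTermOp f t₂ → IsTernaryTermOp f t₃ →
      IsTernaryTermOp f (fun x y z => f (t₁ x y z) (t₂ x y z) (t₃ x y z))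

/-- `t` is the first ternary projection. -/
def IsProj1 {A : Type*} (t : A → A → A → A) : Prop := ∀ x y z : A, t x y z = x

/-- `t` is the second ternary projection. -/
def IsProj2 {A : Type*} (t : A → A → A → A) : Prop := ∀ x y z : A, t x y z = y

/-- `t` is the third ternary projection. -/
def IsProj3 {A : Type*} (t : A → A → A → A) : Prop := ∀ x y z : A, t x y z = z

/-- `t` is a majority operation. -/
def IsMajority {A : Type*} (t : A → A → A → A) : Prop :=
  ∀ x y : A, t x x y = x ∧ t x y x = x ∧ t y x x = x

/-- Key classification: every ternary term operation is a projection or majority. -/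
lemma key_classification {A : Type*}
    (f : A → A → A → A)
    (hmaj1 : ∀ a b : A, f a a b = a)
    (hmaj2 : ∀ a b : A, f a b a = a)
    (hmaj3 : ∀ a b : A, f b a a = a) :
    ∀ t : A → A → A → A, IsTernaryTermOp f t →
      (∀ x y z : A, t x y z = x) ∨ (∀ x y z : A, t x y z = y) ∨
      (∀ x y z : A, t x y z = z) ∨
      ((∀ x y : A, t x x y = x) ∧ (∀ x y : A, t x y x = x) ∧ (∀ x y : A, t y x x = x)) := by
  intro t ht
  induction ht with
  | proj1 => exact Or.inl fun _ _ _ => rfl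
  | proj2 => exact Or.inr (Or.inl fun _ _ _ => rfl)
  | proj3 => exact Or.inr (Or.inr (Or.inl fun _ _ _ => rfl))
  | comp t₁ t₂ t₃ h₁ h₂ h₃ ih1 ih2 ih3 =>
    rcases ih1 with h1|h1|h1|⟨a1,b1,c1⟩ <;> rcases ih2 with h2|h2|h2|⟨a2,b2,c2⟩ <;>
      rcases ih3 with h3|h3|h3|⟨a3,b3,c3⟩ <;>
    first
      | (left; intro x y z; simp only [*]; done)
      | (right; left; intro x y z; simp only [*]; done)
      | (right; right; left; intro x y z; simp only [*]; done)
      | (right; right; right;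
         refine ⟨fun x y => ?_, fun x y => ?_, fun x y => ?_⟩ <;> simp only [*] <;> done)

theorem stmt_1 {A : Type*} (hA : ∃ a b : A, a ≠ b)
    (f : A → A → A → A)
    (hmaj1 : ∀ a b : A, f a a b = a)
    (hmaj2 : ∀ a b : A, f a b a = a)
    (hmaj3 : ∀ a b : A, f b a a = a)
    (hdist : ∀ a b c : A, a ≠ b → b ≠ c → a ≠ c → f a b c = a) :
    ∀ t : A → A → A → A, IsTernaryTermOp f t →
      (IsProj1 t ∧ ¬ IsProj2 t ∧ ¬ IsProj3 t ∧ ¬ IsMajority t) ∨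
      (¬ IsProj1 t ∧ IsProj2 t ∧ ¬ IsProj3 t ∧ ¬ IsMajority t) ∨
      (¬ IsProj1 t ∧ ¬ IsProj2 t ∧ IsProj3 t ∧ ¬ IsMajority t) ∨
      (¬ IsProj1 t ∧ ¬ IsProj2 t ∧ ¬ IsProj3 t ∧ IsMajority t) := by
  obtain ⟨a, b, hab⟩ := hA
  intro t ht
  rcases key_classification f hmaj1 hmaj2 hmaj3 t ht with h|h|h|⟨m1,m2,m3⟩
  · refine Or.inl ⟨h, ?_, ?_, ?_⟩
    · intro h'; exact hab ((h a b b).symm.trans (h' a b b))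
    · intro h'; exact hab ((h a b b).symm.trans (h' a b b))
    · intro h'; exact hab (((h b a a).symm.trans ((h' a b).2.2)).symm)
  · refine Or.inr (Or.inl ⟨?_, h, ?_, ?_⟩)
    · intro h'; exact hab ((h' a b b).symm.trans (h a b b))
    · intro h'; exact hab ((h b a b).symm.trans (h' b a b))
    · intro h'; exact hab (((h' a b).2.1).symm.trans (h a b a))
  · refine Or.inr (Or.inr (Or.inl ⟨?_, ?_, h, ?_⟩))
    · intro h'; exact hab (((h' b b a).symm.trans (h b b a)).symm)
    · intro h'; exact hab (((h' b b a).symm.trans (h b b a)).symm)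
    · intro h'; exact hab (((h' a b).1).symm.trans (h a a b))
  · refine Or.inr (Or.inr (Or.inr ⟨?_, ?_, ?_, fun x y => ⟨m1 x y, m2 x y, m3 x y⟩⟩))
    · intro h'; exact hab ((m3 a b).symm.trans (h' b a a))
    · intro h'; exact hab ((m2 a b).symm.trans (h' a b a))
    · intro h'; exact hab ((m1 a b).symm.trans (h' a a b))
end

section
/- Let R be a ring and M a (left) R-module. Suppose α, β, γ, a, b, c ∈ R are such that the operations p(x,y,z) = α•x + β•y + γ•z and q(x,y,z) = a•x + b•y + c•z on M are idempotent (p(x,x,x) = x and q(x,x,x) = x for all x ∈ M) and satisfy, for all x,y ∈ M, the identities p(x,x,y) = p(x,y,y) = p(x,y,x) = q(x,x,y) = q(x,y,x) = q(y,x,x). Then M is trivial, i.e., every element of M equals 0. -/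
theorem stmt_3 {R : Type*} [Ring R] {M : Type*} [AddCommGroup M] [Module R M]
    (α β γ a b c : R)
    (hp_idem : ∀ x : M, α • x + β • x + γ • x = x)
    (hq_idem : ∀ x : M, a • x + b • x + c • x = x)
    (h1 : ∀ x y : M, α • x + β • x + γ • y = α • x + β • y + γ • y)
    (h2 : ∀ x y : M, α • x + β • y + γ • y = α • x + β • y + γ • x)
    (h3 : ∀ x y : M, α • x + β • y + γ • x = a • x + b • x + c • y)
    (h4 : ∀ x y : M, a • x + b • x + c • y = a • x + b • y + c • x)
    (h5 : ∀ x y : M, a • x + b • y + c • x = a • y + b • x + c • x) :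
    ∀ x : M, x = 0 := by
  intro x
  have hβ : β • x = 0 := by have := h1 x 0; simpa using this
  have hγ : γ • x = 0 := by have := h2 x 0; simpa using this.symm
  have hα : α • x = x := by have := hp_idem x; rw [hβ, hγ] at this; simpa using this
  have hcb : c • x = b • x := by have := h4 0 x; simpa using this
  have hba : b • x = a • x := by have := h5 0 x; simpa using this
  have hab : x = a • x + b • x := by
    have := h3 x 0; rw [hα, hγ] at this; simpa using this
  have h3a := hq_idem x
  rw [hcb, hba] at h3a
  rw [hba] at hab
  -- h3a : a•x + a•x + a•x = x, hab : x = a•x + a•x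
  have ha : a • x = 0 := by
    have : a • x + (a • x + a • x) = x := by rw [add_assoc] at h3a; exact h3a
    rw [← hab] at this
    exact add_eq_right.mp this
  rw [hab, ha, add_zero]
end

section
/- Let R be a ring and M a (left) R-module. Suppose α, β, γ, a, b, c ∈ R are such that the operations p(x,y,z) = α•x + β•y + γ•z and q(x,y,z) = a•x + b•y + c•z on M are idempotent (p(x,x,x) = x and q(x,x,x) = x for all x ∈ M) and satisfy, for all x,y ∈ M, the identities of system (S2): p(x,x,y) = p(x,y,y) and p(x,y,x) = q(x,x,y) = q(x,y,x) = q(y,x,x). Then M is trivial, i.e., every element of M equals 0. -/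
theorem stmt_4 {R : Type*} [Ring R] {M : Type*} [AddCommGroup M] [Module R M]
    (α β γ a b c : R)
    (hp_idem : ∀ x : M, α • x + β • x + γ • x = x)
    (hq_idem : ∀ x : M, a • x + b • x + c • x = x)
    (h1 : ∀ x y : M, α • x + β • x + γ • y = α • x + β • y + γ • y)
    (h2 : ∀ x y : M, α • x + β • y + γ • x = a • x + b • x + c • y)
    (h3 : ∀ x y : M, a • x + b • x + c • y = a • x + b • y + c • x)
    (h4 : ∀ x y : M, a • x + b • y + c • x = a • y + b • x + c • x) :
    ∀ x : M, x = 0 := by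
  have hβ : ∀ y : M, β • y = 0 := by
    intro y
    have h := h1 0 y
    simp only [smul_zero, zero_add] at h
    exact right_eq_add.mp h
  have hc : ∀ y : M, c • y = 0 := by
    intro y
    have h := h2 0 y
    simp only [smul_zero, zero_add, add_zero] at h
    rw [hβ] at h
    exact h.symm
  have hb : ∀ y : M, b • y = 0 := by
    intro y
    have h := h3 0 y
    simp only [smul_zero, zero_add, add_zero] at h
    rw [hc] at h
    exact h.symm
  have ha : ∀ y : M, a • y = 0 := by
    intro y
    have h := h4 0 y
    simp only [smul_zero, zero_add, add_zero] at h
    rw [hb] at h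
    simpa using h.symm
  intro x
  have h := hq_idem x
  rw [ha, hb, hc] at h
  simpa using h.symm
end

section
/- Let R be a ring and M a (left) R-module. Suppose α, β, γ, a, b, c ∈ R are such that the operations p(x,y,z) = α•x + β•y + γ•z and q(x,y,z) = a•x + b•y + c•z on M are idempotent (p(x,x,x) = x and q(x,x,x) = x for all x ∈ M) and satisfy, for all x,y ∈ M, the identities of system (S3): p(x,x,y) = x and p(x,y,x) = p(y,x,x) = q(y,x,x) = q(x,y,x) = q(x,x,y). Then M is trivial, i.e., every element of M equals 0. -/
theorem stmt_5 {R : Type*} [Ring R] {M : Type*} [AddCommGroup M] [Module R M]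
    (α β γ a b c : R)
    (hp_idem : ∀ x : M, α • x + β • x + γ • x = x)
    (hq_idem : ∀ x : M, a • x + b • x + c • x = x)
    (h1 : ∀ x y : M, α • x + β • x + γ • y = x)
    (h2 : ∀ x y : M, α • x + β • y + γ • x = α • y + β • x + γ • x)
    (h3 : ∀ x y : M, α • y + β • x + γ • x = a • y + b • x + c • x)
    (h4 : ∀ x y : M, a • y + b • x + c • x = a • x + b • y + c • x)
    (h5 : ∀ x y : M, a • x + b • y + c • x = a • x + b • x + c • y) :
    ∀ x : M, x = 0 := by
  have hγ : ∀ y : M, γ • y = 0 := fun y => by simpa using h1 0 y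
  have hab : ∀ y : M, a • y = b • y := fun y => by simpa using h4 0 y
  have hbc : ∀ y : M, b • y = c • y := fun y => by simpa using h5 0 y
  have hαa : ∀ y : M, α • y = a • y := fun y => by simpa [hγ] using h3 0 y
  have hβ : ∀ y : M, β • y = b • y + c • y := fun y => by simpa [hγ] using h3 y 0
  have ha0 : ∀ y : M, a • y = 0 := by
    intro y
    have h := h2 0 y
    simp [hγ, hβ, hαa, ← hab, ← hbc] at h
    -- h should reduce to something like a•y + a•y = a•y
    exact h
  intro x
  have := hq_idem x
  rw [← hbc, ← hab, ha0] at this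
  simpa using this.symm
end

section
/- Let R be a ring and M a (left) R-module. Suppose α, β, γ, a, b, c ∈ R are such that the operations p(x,y,z) = α•x + β•y + γ•z and q(x,y,z) = a•x + b•y + c•z on M are idempotent (p(x,x,x) = x and q(x,x,x) = x for all x ∈ M) and satisfy, for all x,y ∈ M, the identities of system (S5): q(x,y,x) = x, p(x,y,y) = p(x,y,x), and p(x,x,y) = q(x,x,y) = q(y,x,x). Then M is trivial, i.e., every element of M equals 0. -/
theorem stmt_6 {R : Type*} [Ring R] {M : Type*} [AddCommGroup M] [Module R M]
    (α β γ a b c : R)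
    (hp_idem : ∀ x : M, α • x + β • x + γ • x = x)
    (hq_idem : ∀ x : M, a • x + b • x + c • x = x)
    (h1 : ∀ x y : M, a • x + b • y + c • x = x)
    (h2 : ∀ x y : M, α • x + β • y + γ • y = α • x + β • y + γ • x)
    (h3 : ∀ x y : M, α • x + β • x + γ • y = a • x + b • x + c • y)
    (h4 : ∀ x y : M, a • x + b • x + c • y = a • y + b • x + c • x) :
    ∀ x : M, x = 0 := by
  have hb : ∀ y : M, b • y = 0 := by
    intro y
    have := h1 0 y
    simpa using this
  have hγ : ∀ y : M, γ • y = 0 := by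
    intro y
    have := h2 0 y
    simpa using this
  have hca : ∀ y : M, c • y = a • y := by
    intro y
    have := h4 0 y
    simpa [hb] using this
  have hc0 : ∀ y : M, c • y = 0 := by
    intro y
    have := h3 0 y
    have h : (0:M) = c • y := by simpa [hb, hγ] using this
    exact h.symm
  intro x
  have := hq_idem x
  rw [hb] at this
  have ha : a • x = 0 := by rw [← hca, hc0]
  rw [ha, hc0] at this
  simpa using this.symm
end

section
/- Let F be the ternary operation on {0,1} × {0,1} given by F((a,b),(c,d),(e,h)) = (maj(a,c,e), b ∧ d ∧ h), where maj is the majority operation on {0,1}. Define v(x,y,z) = F(x,y,z) and w(x,y,z,u) = F(x, y, F(x,z,u)). Then v is an idempotent ternary weak near-unanimity operation (v(x,x,y) = v(x,y,x) = v(y,x,x) for all x,y), w is an idempotent 4-ary weak near-unanimity operation (w(y,x,x,x) = w(x,y,x,x) = w(x,x,y,x) = w(x,x,x,y) for all x,y), and v(y,x,x) = w(y,x,x,x) for all x,y. -/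
/-- The majority operation on the two-element set `{0,1}` (modelled on `Bool`). -/
def bmaj (a b c : Bool) : Bool := (a && b) || (a && c) || (b && c)

/-- The ternary operation `F` on `{0,1} × {0,1}` acting as the majority
operation in the first coordinate and as the triple Boolean meet in the
second coordinate. -/
def F (x y z : Bool × Bool) : Bool × Bool := (bmaj x.1 y.1 z.1, x.2 && y.2 && z.2)

theorem stmt_11
    (v : Bool × Bool → Bool × Bool → Bool × Bool → Bool × Bool)
    (hv : ∀ x y z, v x y z = F x y z)
    (w : Bool × Bool → Bool × Bool → Bool × Bool → Bool × Bool → Bool × Bool)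
    (hw : ∀ x y z u, w x y z u = F x y (F x z u)) :
    (∀ x, v x x x = x) ∧
    (∀ x y, v x x y = v x y x ∧ v x y x = v y x x) ∧
    (∀ x, w x x x x = x) ∧
    (∀ x y, w y x x x = w x y x x ∧ w x y x x = w x x y x ∧ w x x y x = w x x x y) ∧
    (∀ x y, v y x x = w y x x x) := by
  simp only [hv, hw]
  decide
end

section
/- Let F be the ternary operation on {0,1} × {0,1} given by F((a,b),(c,d),(e,h)) = (maj(a,c,e), b ∧ d ∧ h), where maj is the majority operation on {0,1}. Then no ternary term operation q of the algebra ({0,1} × {0,1}, F) — i.e., no member of the smallest set of functions ({0,1}×{0,1})³ → {0,1}×{0,1} containing the three ternary projections and closed under pointwise composition with F — satisfies both q(x,y,x) = x for all x,y and q(x,x,y) = q(y,x,x) for all x,y. Consequently this algebra does not realize system (S5). -/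
/-- The ternary term operations of the algebra `({0,1} × {0,1}, F)`: the
smallest set of functions containing the three ternary projections and closed
under pointwise composition with `F`. -/
inductive IsFTermOp : (Bool × Bool → Bool × Bool → Bool × Bool → Bool × Bool) → Prop
  | proj1 : IsFTermOp (fun x _ _ => x)
  | proj2 : IsFTermOp (fun _ y _ => y)
  | proj3 : IsFTermOp (fun _ _ z => z)
  | comp (t₁ t₂ t₃ : Bool × Bool → Bool × Bool → Bool × Bool → Bool × Bool) :
      IsFTermOp t₁ → IsFTermOp t₂ → IsFTermOp t₃ →
      IsFTermOp (fun x y z => F (t₁ x y z) (t₂ x y z) (t₃ x y z))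

/-- Every ternary term operation of `({0,1}×{0,1}, F)` has the form
`(x,y,z) ↦ (g x.1 y.1 z.1, (s1 → x.2) ∧ (s2 → y.2) ∧ (s3 → z.2))` where `g`
is self-dual and is independent of its middle argument when `s2 = false`. -/
theorem key_invariant (q : Bool × Bool → Bool × Bool → Bool × Bool → Bool × Bool)
    (hq : IsFTermOp q) :
    ∃ (g : Bool → Bool → Bool → Bool) (s1 s2 s3 : Bool),
      (∀ x y z, q x y z =
        (g x.1 y.1 z.1, ((!s1 || x.2) && (!s2 || y.2) && (!s3 || z.2)))) ∧
      (s2 = false → ∀ a b b' c, g a b c = g a b' c) ∧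
      (∀ a b c, g (!a) (!b) (!c) = !(g a b c)) := by
  induction hq with
  | proj1 =>
      exact ⟨fun a _ _ => a, true, false, false,
        fun x y z => by simp, fun _ a b b' c => rfl, fun a b c => rfl⟩
  | proj2 =>
      exact ⟨fun _ b _ => b, false, true, false,
        fun x y z => by simp, fun h a b b' c => by simp at h, fun a b c => rfl⟩
  | proj3 =>
      exact ⟨fun _ _ c => c, false, false, true,
        fun x y z => by simp, fun _ a b b' c => rfl, fun a b c => rfl⟩
  | comp t₁ t₂ t₃ h₁ h₂ h₃ ih₁ ih₂ ih₃ =>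
      obtain ⟨g₁, a₁, b₁, c₁, rep₁, ind₁, sd₁⟩ := ih₁
      obtain ⟨g₂, a₂, b₂, c₂, rep₂, ind₂, sd₂⟩ := ih₂
      obtain ⟨g₃, a₃, b₃, c₃, rep₃, ind₃, sd₃⟩ := ih₃
      refine ⟨fun a b c => bmaj (g₁ a b c) (g₂ a b c) (g₃ a b c),
        a₁ || a₂ || a₃, b₁ || b₂ || b₃, c₁ || c₂ || c₃, ?_, ?_, ?_⟩
      · intro x y z
        dsimp only
        rw [rep₁, rep₂, rep₃]
        simp only [F]
        congr 1
        cases a₁ <;> cases a₂ <;> cases a₃ <;> cases b₁ <;> cases b₂ <;> cases b₃ <;>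
          cases c₁ <;> cases c₂ <;> cases c₃ <;>
          cases x.2 <;> cases y.2 <;> cases z.2 <;> rfl
      · intro h a b b' c
        simp only [Bool.or_eq_false_iff] at h
        dsimp only
        rw [ind₁ h.1.1 a b b' c, ind₂ h.1.2 a b b' c, ind₃ h.2 a b b' c]
      · intro a b c
        dsimp only
        rw [sd₁, sd₂, sd₃]
        cases g₁ a b c <;> cases g₂ a b c <;> cases g₃ a b c <;> rfl

theorem stmt_13 :
    ¬ ∃ q : Bool × Bool → Bool × Bool → Bool × Bool → Bool × Bool,
      IsFTermOp q ∧ (∀ x y, q x y x = x) ∧ (∀ x y, q x x y = q y x x) := by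
  rintro ⟨q, hq, h1, h2⟩
  obtain ⟨g, s1, s2, s3, hrep, hind, hsd⟩ := key_invariant q hq
  -- From q x y x = x with x.2 = true, y.2 = false we get s2 = false.
  have hs2 : s2 = false := by
    have := h1 (false, true) (false, false)
    rw [hrep] at this
    have := congrArg Prod.snd this
    simpa using this
  have hindep := hind hs2
  -- From q x x y = q y x x (first coordinates): g a a b = g b a a.
  have hsym : ∀ a b : Bool, g a a b = g b a a := by
    intro a b
    have := h2 ((a, true)) ((b, true))
    rw [hrep, hrep] at this
    exact congrArg Prod.fst this
  -- Contradiction: g 0 0 1 = g 1 0 0 = g 1 1 0 = ¬ g 0 0 1.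
  have e1 : g false false true = g true false false := hsym false true
  have e2 : g true false false = g true true false := hindep true false true false
  have e3 : g true true false = !(g false false true) := by
    have := hsd false false true
    simpa using this
  have contra : g false false true = !(g false false true) := e1.trans (e2.trans e3)
  simp at contra
end

section
/- Let F be the ternary operation on {0,1} × {0,1} given by F((a,b),(c,d),(e,h)) = (maj(a,c,e), b ∧ d ∧ h), where maj is the majority operation on {0,1}. Then no ternary term operation p of the algebra ({0,1} × {0,1}, F) — i.e., no member of the smallest set of functions ({0,1}×{0,1})³ → {0,1}×{0,1} containing the three ternary projections and closed under pointwise composition with F — satisfies both p(x,x,y) = x for all x,y and p(x,y,x) = p(y,x,x) for all x,y. Consequently this algebra does not realize system (S3). -/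
/-- Structural invariant: every term decomposes componentwise, the first
component is self-dual, and if the second component ignores the third
variable then so does the first component. -/
lemma term_invariant (t : Bool × Bool → Bool × Bool → Bool × Bool → Bool × Bool)
    (ht : IsFTermOp t) :
    ∃ m s : Bool → Bool → Bool → Bool,
      (∀ x y z, t x y z = (m x.1 y.1 z.1, s x.2 y.2 z.2)) ∧
      (∀ a b c, m (!a) (!b) (!c) = ! m a b c) ∧
      (s true true false = true → ∀ a b c c', m a b c = m a b c') := by
  induction ht with
  | proj1 =>
      exact ⟨fun a _ _ => a, fun a _ _ => a, fun x y z => rfl,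
        fun a b c => rfl, fun _ a b c c' => rfl⟩
  | proj2 =>
      exact ⟨fun _ b _ => b, fun _ b _ => b, fun x y z => rfl,
        fun a b c => rfl, fun _ a b c c' => rfl⟩
  | proj3 =>
      refine ⟨fun _ _ c => c, fun _ _ c => c, fun x y z => rfl,
        fun a b c => rfl, fun h a b c c' => ?_⟩
      simp at h
  | comp t₁ t₂ t₃ h₁ h₂ h₃ ih₁ ih₂ ih₃ =>
      obtain ⟨m₁, s₁, he₁, hd₁, hi₁⟩ := ih₁
      obtain ⟨m₂, s₂, he₂, hd₂, hi₂⟩ := ih₂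
      obtain ⟨m₃, s₃, he₃, hd₃, hi₃⟩ := ih₃
      refine ⟨fun a b c => bmaj (m₁ a b c) (m₂ a b c) (m₃ a b c),
        fun a b c => s₁ a b c && s₂ a b c && s₃ a b c,
        fun x y z => by simp [F, he₁, he₂, he₃], fun a b c => ?_, fun h a b c c' => ?_⟩
      · dsimp only
        rw [hd₁, hd₂, hd₃]
        cases m₁ a b c <;> cases m₂ a b c <;> cases m₃ a b c <;> rfl
      · simp only [Bool.and_eq_true] at h
        dsimp only
        rw [hi₁ h.1.1 a b c c', hi₂ h.1.2 a b c c', hi₃ h.2 a b c c']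

theorem stmt_14 :
    ¬ ∃ p : Bool × Bool → Bool × Bool → Bool × Bool → Bool × Bool,
      IsFTermOp p ∧ (∀ x y, p x x y = x) ∧ (∀ x y, p x y x = p y x x) := by
  rintro ⟨p, hp, h1, h2⟩
  obtain ⟨m, s, he, hd, hi⟩ := term_invariant p hp
  -- From p(x,x,y) = x with x = (a,true), y = (b,false): s true true false = true
  have hs : s true true false = true := by
    have := h1 (true, true) (true, false)
    rw [he] at this
    exact (Prod.mk.injEq _ _ _ _ ▸ this).2
  have hind := hi hs
  -- From p(x,y,x) = p(y,x,x): m true false true = m false true true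
  have hm : m true false true = m false true true := by
    have := h2 (true, true) (false, true)
    rw [he, he] at this
    exact (Prod.mk.injEq _ _ _ _ ▸ this).1
  -- independence of third arg + self-duality give a contradiction
  have h3 : m false true true = m false true false := hind false true true false
  have h4 : m false true false = ! m true false true := by
    simpa using hd true false true
  have hcontra : m true false true = ! m true false true := hm.trans (h3.trans h4)
  exact absurd hcontra (by cases m true false true <;> simp)
end
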